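/- Let f : ℝ^d → ℝ satisfy the SPB growth estimate with parameters R₁, R₂, m and let σ > 0. Set 𝒜 = 2^{2m−2} R₁ σ^{m−1} (m+1+d)^{(m+1)/2} + σ^{−1} R₂ √d, ℬ = 2^{2m−2} σ^{−1} R₁ √d and 𝒞 = 2^{m−1} σ^{−1} R₁ √d. Then ‖∇f_σ(x) − ∇f_σ(y)‖ ≤ (𝒜 + ℬ‖x‖^m + 𝒞‖y − x‖^m) ‖x − y‖ for all x, y ∈ ℝ^d. -/

import Mathlib

open MeasureTheory Filter Set
open scoped InnerProductSpace ENNReal Topology Real NNReal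

/-- The standard Gaussian probability measure `N(0, I)` on `ℝ^d`
(with density `(2π)^{-d/2} e^{-‖u‖²/2}`), realized as the product of `d`
standard one-dimensional Gaussians. -/
noncomputable def stdGaussian (d : ℕ) : Measure (EuclideanSpace ℝ (Fin d)) :=
  Measure.map (MeasurableEquiv.toLp 2 (Fin d → ℝ))
    (Measure.pi fun _ : Fin d => ProbabilityTheory.gaussianReal 0 1)

instance (d : ℕ) : IsProbabilityMeasure (stdGaussian d) :=
  Measure.isProbabilityMeasure_map (MeasurableEquiv.toLp 2 (Fin d → ℝ)).measurable.aemeasurable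

/-- `f` satisfies the SPB growth estimate with parameters `R1, R2, m`:
`|f x - f y| ≤ (2^{m-1} R₁ ‖x‖^m + 2^{m-1} R₁ ‖y-x‖^m + R₂) ‖x-y‖`. -/
def SPBGrowth {d : ℕ} (f : EuclideanSpace ℝ (Fin d) → ℝ) (R1 R2 : ℝ) (m : ℕ) : Prop :=
  ∀ x y : EuclideanSpace ℝ (Fin d),
    |f x - f y| ≤ ((2 : ℝ) ^ ((m : ℤ) - 1) * R1 * ‖x‖ ^ m
      + (2 : ℝ) ^ ((m : ℤ) - 1) * R1 * ‖y - x‖ ^ m + R2) * ‖x - y‖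

/-- The Gaussian smoothing `f_σ(x) = E_{u ∼ N(0,I)}[f (x + σ u)]`. -/
noncomputable def gsmooth {d : ℕ} (σ : ℝ) (f : EuclideanSpace ℝ (Fin d) → ℝ)
    (x : EuclideanSpace ℝ (Fin d)) : ℝ :=
  ∫ u, f (x + σ • u) ∂(stdGaussian d)

/-- The gradient of the Gaussian smoothing:
`∇f_σ(x) = σ⁻¹ E_{u ∼ N(0,I)}[f (x + σ u) u]`. -/
noncomputable def gsGrad {d : ℕ} (σ : ℝ) (f : EuclideanSpace ℝ (Fin d) → ℝ)
    (x : EuclideanSpace ℝ (Fin d)) : EuclideanSpace ℝ (Fin d) :=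
  σ⁻¹ • ∫ u, f (x + σ • u) • u ∂(stdGaussian d)

/-- The constant `ℋ_(p)` of Lemma 4.3. -/
noncomputable def spbH (d m p : ℕ) (R1 R2 σ : ℝ) : ℝ :=
  3 ^ (p - 1) * max ((2 : ℝ) ^ (((m : ℤ) - 1) * p) * R1 ^ p * ((2 * p + d : ℕ) : ℝ) ^ p)
    (R2 ^ p * ((2 * p + d : ℕ) : ℝ) ^ p +
      (2 : ℝ) ^ (((m : ℤ) - 1) * p) * R1 ^ p * σ ^ (m * p) *
        (((m + 2) * p + d : ℕ) : ℝ) ^ ((((m + 2) * p : ℕ) : ℝ) / 2))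

/-- The function `ℳ` of Lemma 4.2. -/
noncomputable def spbM {d : ℕ} (m : ℕ) (R1 R2 σ : ℝ) (x : EuclideanSpace ℝ (Fin d)) : ℝ :=
  ((2 : ℝ) ^ ((m : ℤ) - 1) * R1 * ‖x‖ ^ m + R2) * Real.sqrt d +
    (2 : ℝ) ^ ((m : ℤ) - 1) * R1 * σ ^ m * ((m + 1 + d : ℕ) : ℝ) ^ (((m : ℝ) + 1) / 2)

/-- The constant `𝒜`. -/
noncomputable def spbA (d m : ℕ) (R1 R2 σ : ℝ) : ℝ :=
  (2 : ℝ) ^ (2 * (m : ℤ) - 2) * R1 * σ ^ ((m : ℤ) - 1) *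
      ((m + 1 + d : ℕ) : ℝ) ^ (((m : ℝ) + 1) / 2) + σ⁻¹ * R2 * Real.sqrt d

/-- The constant `ℬ`. -/
noncomputable def spbB (d m : ℕ) (R1 σ : ℝ) : ℝ :=
  (2 : ℝ) ^ (2 * (m : ℤ) - 2) * σ⁻¹ * R1 * Real.sqrt d

/-- The constant `𝒞`. -/
noncomputable def spbC (d m : ℕ) (R1 σ : ℝ) : ℝ :=
  (2 : ℝ) ^ ((m : ℤ) - 1) * σ⁻¹ * R1 * Real.sqrt d

open MeasureTheory ProbabilityTheory Real

noncomputable section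
local notation "ν" => gaussianReal 0 1

lemma gauss_int (g : ℝ → ℝ) :
    ∫ t, g t ∂ν = ∫ t, gaussianPDFReal 0 1 t * g t := by
  rw [gaussianReal_of_var_ne_zero 0 one_ne_zero]
  have h : (gaussianPDF 0 1) = fun x => ((Real.toNNReal (gaussianPDFReal 0 1 x) : ℝ≥0) : ℝ≥0∞) := rfl
  rw [h, integral_withDensity_eq_integral_smul
    ((measurable_gaussianPDFReal 0 1).real_toNNReal)]
  congr 1 with x
  simp [NNReal.smul_def, Real.coe_toNNReal _ (gaussianPDFReal_nonneg 0 1 x)]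

lemma gauss_integrable (g : ℝ → ℝ) (hg : Integrable (fun x => g x * gaussianPDFReal 0 1 x)) :
    Integrable g ν := by
  rw [gaussianReal_of_var_ne_zero 0 one_ne_zero]
  rw [integrable_withDensity_iff (measurable_gaussianPDF 0 1)
    (Filter.Eventually.of_forall fun x => ENNReal.ofReal_lt_top)]
  refine hg.congr (Filter.Eventually.of_forall fun x => ?_)
  simp [gaussianPDF, ENNReal.toReal_ofReal (gaussianPDFReal_nonneg 0 1 x)]

lemma pdf01 (x : ℝ) : gaussianPDFReal 0 1 x = (√(2 * π))⁻¹ * rexp (-(1/2) * x ^ 2) := by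
  rw [gaussianPDFReal_def]
  norm_num
  left; congr 1; ring

lemma gauss_mgf {l : ℝ} (hl : l < 1/2) :
    ∫ t, rexp (l * t ^ 2) ∂ν = (√(1 - 2*l))⁻¹ := by
  rw [gauss_int]
  have h : ∀ x : ℝ, gaussianPDFReal 0 1 x * rexp (l * x ^ 2)
      = (√(2 * π))⁻¹ * rexp (-(1/2 - l) * x ^ 2) := by
    intro x
    rw [pdf01, mul_assoc, ← Real.exp_add]
    congr 2; ring
  simp_rw [h]
  rw [integral_const_mul, integral_gaussian]
  have h2 : (0:ℝ) < 1/2 - l := by linarith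
  rw [div_eq_mul_inv, Real.sqrt_mul pi_pos.le, Real.sqrt_inv,
    Real.sqrt_mul (by norm_num : (0:ℝ) ≤ 2)]
  have hπ : (0:ℝ) < √π := Real.sqrt_pos.2 pi_pos
  have h2' : (0:ℝ) < √(1/2 - l) := Real.sqrt_pos.2 h2
  have h2'' : (0:ℝ) < √2 := by positivity
  rw [show (1:ℝ) - 2*l = 2*(1/2 - l) by ring,
    Real.sqrt_mul (by norm_num : (0:ℝ) ≤ 2)]
  field_simp

lemma gauss_mgf_integrable {l : ℝ} (hl : l < 1/2) :
    Integrable (fun t => rexp (l * t ^ 2)) ν := by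
  apply gauss_integrable
  have h : ∀ x : ℝ, rexp (l * x ^ 2) * gaussianPDFReal 0 1 x
      = (√(2 * π))⁻¹ * rexp (-(1/2 - l) * x ^ 2) := by
    intro x
    rw [pdf01, mul_comm, mul_assoc, ← Real.exp_add]
    congr 2; ring
  simp_rw [h]
  exact (integrable_exp_neg_mul_sq (by linarith)).const_mul _

lemma gauss_sq_integrable : Integrable (fun t => t ^ 2) ν := by
  apply gauss_integrable
  have h : ∀ x : ℝ, x ^ 2 * gaussianPDFReal 0 1 x
      = (√(2 * π))⁻¹ * (x ^ ((2:ℕ):ℝ) * rexp (-(1/2) * x ^ 2)) := by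
    intro x
    rw [pdf01, Real.rpow_natCast]; ring
  simp_rw [h]
  exact (integrable_rpow_mul_exp_neg_mul_sq (by norm_num) (by norm_num)).const_mul _

lemma gauss_sq_int : ∫ t, t ^ 2 ∂ν = 1 := by
  rw [gauss_int]
  have h : ∀ x : ℝ, gaussianPDFReal 0 1 x * x ^ 2
      = (√(2 * π))⁻¹ * (x ^ 2 * rexp (-(1/2) * x ^ 2)) := by
    intro x; rw [pdf01]; ring
  simp_rw [h]
  rw [integral_const_mul]
  have habs : ∀ x : ℝ, x ^ 2 * rexp (-(1/2) * x ^ 2)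
      = (fun t => t ^ 2 * rexp (-(1/2) * t ^ 2)) |x| := by
    intro x; simp [sq_abs]
  have h2 : (∫ x : ℝ, x ^ 2 * rexp (-(1/2) * x ^ 2))
      = 2 * ∫ x in Set.Ioi (0:ℝ), x ^ 2 * rexp (-(1/2) * x ^ 2) := by
    rw [← integral_comp_abs (f := fun t => t ^ 2 * rexp (-(1/2) * t ^ 2))]
    congr 1 with x
    simp [sq_abs]
  rw [h2]
  have h3 : (∫ x in Set.Ioi (0:ℝ), x ^ 2 * rexp (-(1/2) * x ^ 2))
      = ((1:ℝ)/2) ^ (-((2:ℝ) + 1) / 2) * (1 / 2) * Real.Gamma (((2:ℝ) + 1) / 2) := by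
    rw [← integral_rpow_mul_exp_neg_mul_rpow (by norm_num : (0:ℝ) < 2) (by norm_num : (-1:ℝ) < 2) (by norm_num : (0:ℝ) < 1/2)]
    congr 1 with x
    rw [Real.rpow_two]
  rw [h3]
  have hg : Real.Gamma (((2:ℝ) + 1) / 2) = √π / 2 := by
    rw [show ((2:ℝ) + 1)/2 = 1/2 + 1 by norm_num, Real.Gamma_add_one (by norm_num),
      Real.Gamma_one_half_eq]
    ring
  rw [hg]
  have h4 : ((1:ℝ)/2) ^ (-((2:ℝ) + 1) / 2) = 2 * √2 := by
    rw [show ((1:ℝ)/2) = 2⁻¹ by norm_num, ← Real.rpow_neg_one (2:ℝ),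
      ← Real.rpow_mul (by norm_num : (0:ℝ) ≤ 2)]
    rw [show (-1:ℝ) * (-((2:ℝ)+1)/2) = 1 + 1/2 by norm_num,
      Real.rpow_add (by norm_num : (0:ℝ) < 2), Real.rpow_one, ← Real.sqrt_eq_rpow]
  rw [h4, Real.sqrt_mul (by norm_num : (0:ℝ) ≤ 2)]
  have h2'' : (0:ℝ) < √2 := by positivity
  have hπ : (0:ℝ) < √π := Real.sqrt_pos.2 pi_pos
  field_simp

lemma pi_integrable : ∀ {n : ℕ} (f : Fin n → ℝ → ℝ), (∀ i, Integrable (f i) ν) →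
    Integrable (fun x : Fin n → ℝ => ∏ i, f i (x i)) (Measure.pi fun _ => ν) := by
  intro n
  induction n with
  | zero =>
    intro f _
    simp only [Finset.univ_eq_empty, Finset.prod_empty]
    exact integrable_const 1
  | succ n ih =>
    intro f hf
    have hm := ((measurePreserving_piFinSuccAbove (fun _ : Fin (n+1) => ν) 0).symm)
    rw [← hm.integrable_comp_emb (MeasurableEquiv.measurableEmbedding _)]
    simp_rw [MeasurableEquiv.piFinSuccAbove_symm_apply, Fin.insertNthEquiv,
      Fin.prod_univ_succ, Fin.insertNth_zero]
    simp only [Fin.zero_succAbove, Function.comp_def, Fin.cons_zero, Fin.cons_succ,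
      Equiv.coe_fn_mk]
    have h2 : Integrable (fun (x : Fin n → ℝ) ↦ ∏ j, f (Fin.succ j) (x j))
        (Measure.pi fun _ => ν) := ih (fun i ↦ f (Fin.succ i)) (fun i ↦ hf _)
    exact Integrable.mul_prod (hf 0) h2

lemma pi_integral : ∀ {n : ℕ} (f : Fin n → ℝ → ℝ),
    ∫ x : Fin n → ℝ, (∏ i, f i (x i)) ∂(Measure.pi fun _ => ν) = ∏ i, ∫ t, f i t ∂ν := by
  intro n
  induction n with
  | zero => intro f; simp
  | succ n ih =>
    intro f
    calc
      ∫ x : Fin (n+1) → ℝ, (∏ i, f i (x i)) ∂(Measure.pi fun _ => ν)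
          = ∫ x : ℝ × (Fin n → ℝ),
            f 0 x.1 * ∏ i : Fin n, f (Fin.succ i) (x.2 i) ∂(Measure.prod (gaussianReal 0 1) (Measure.pi fun _ => ν)) := by
        rw [← ((measurePreserving_piFinSuccAbove (fun _ : Fin (n+1) => ν) 0).symm).integral_comp']
        congr 1 with z
        rw [Fin.prod_univ_succ]
        simp [MeasurableEquiv.piFinSuccAbove_symm_apply, Fin.insertNthEquiv, Fin.insertNth_zero,
          Fin.zero_succAbove]
      _ = (∫ t, f 0 t ∂ν) * ∏ i : Fin n, ∫ t, f (Fin.succ i) t ∂ν := by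
        rw [← ih fun i => f (Fin.succ i), ← integral_prod_mul]
      _ = ∏ i, ∫ t, f i t ∂ν := by rw [Fin.prod_univ_succ]

lemma stdG_int {d : ℕ} {F : Type*} [NormedAddCommGroup F] [NormedSpace ℝ F]
    (g : EuclideanSpace ℝ (Fin d) → F) :
    ∫ u, g u ∂(stdGaussian d)
      = ∫ v, g ((MeasurableEquiv.toLp 2 (Fin d → ℝ)) v)
          ∂(Measure.pi fun _ : Fin d => ν) :=
  integral_map_equiv _ _

lemma stdG_integrable_iff {d : ℕ} {F : Type*} [NormedAddCommGroup F]
    (g : EuclideanSpace ℝ (Fin d) → F) :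
    Integrable g (stdGaussian d) ↔
      Integrable (fun v => g ((MeasurableEquiv.toLp 2 (Fin d → ℝ)) v))
        (Measure.pi fun _ : Fin d => ν) :=
  integrable_map_equiv _ _

lemma esymm_normsq {d : ℕ} (v : Fin d → ℝ) :
    ‖(MeasurableEquiv.toLp 2 (Fin d → ℝ)) v‖ ^ 2 = ∑ i, (v i) ^ 2 := by
  rw [EuclideanSpace.norm_eq, Real.sq_sqrt (by positivity)]
  simp only [Real.norm_eq_abs, sq_abs]
  exact Finset.sum_congr rfl fun i _ => rfl

lemma stdG_mgf {d : ℕ} {l : ℝ} (hl : l < 1/2) :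
    ∫ u, rexp (l * ‖u‖ ^ 2) ∂(stdGaussian d) = ((√(1 - 2*l))⁻¹) ^ d := by
  rw [stdG_int]
  have h : ∀ v : Fin d → ℝ, rexp (l * ‖(MeasurableEquiv.toLp 2 (Fin d → ℝ)) v‖ ^ 2)
      = ∏ i, rexp (l * (v i) ^ 2) := by
    intro v
    rw [esymm_normsq, Finset.mul_sum, Real.exp_sum]
  simp_rw [h]
  rw [pi_integral fun _ => (fun t => rexp (l * t ^ 2))]
  simp [gauss_mgf hl]

lemma stdG_mgf_integrable {d : ℕ} {l : ℝ} (hl : l < 1/2) :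
    Integrable (fun u => rexp (l * ‖u‖ ^ 2)) (stdGaussian d) := by
  rw [stdG_integrable_iff]
  have h : ∀ v : Fin d → ℝ, rexp (l * ‖(MeasurableEquiv.toLp 2 (Fin d → ℝ)) v‖ ^ 2)
      = ∏ i, rexp (l * (v i) ^ 2) := by
    intro v
    rw [esymm_normsq, Finset.mul_sum, Real.exp_sum]
  simp_rw [h]
  exact pi_integrable _ (fun i => gauss_mgf_integrable hl)

lemma stdG_sq_coord_integrable {d : ℕ} (i : Fin d) :
    Integrable (fun v : Fin d → ℝ => (v i) ^ 2) (Measure.pi fun _ : Fin d => ν) := by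
  have h := pi_integrable (fun j => fun t : ℝ => if j = i then t ^ 2 else 1)
    (fun j => by
      show Integrable (fun t : ℝ => if j = i then t ^ 2 else 1) ν
      split <;> simp [gauss_sq_integrable, integrable_const])
  refine h.congr (Filter.Eventually.of_forall fun v => ?_)
  simp [Finset.prod_ite_eq']
lemma stdG_normsq_int {d : ℕ} :
    ∫ u, ‖u‖ ^ 2 ∂(stdGaussian d) = d := by
  rw [stdG_int]
  simp_rw [esymm_normsq]
  rw [integral_finset_sum _ (fun i _ => stdG_sq_coord_integrable i)]
  have h : ∀ i : Fin d, ∫ v : Fin d → ℝ, (v i) ^ 2 ∂(Measure.pi fun _ : Fin d => ν) = 1 := by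
    intro i
    have h2 : ∀ v : Fin d → ℝ, (v i) ^ 2 = ∏ j, (if j = i then (v j) ^ 2 else 1) := by
      intro v; rw [Finset.prod_ite_eq']; simp
    simp_rw [h2]
    rw [pi_integral (fun j => fun t : ℝ => if j = i then t ^ 2 else 1)]
    apply Finset.prod_eq_one
    intro j _
    split
    · exact gauss_sq_int
    · simp
  simp [h]

lemma stdG_normsq_integrable {d : ℕ} :
    Integrable (fun u : EuclideanSpace ℝ (Fin d) => ‖u‖ ^ 2) (stdGaussian d) := by
  rw [stdG_integrable_iff]
  simp_rw [esymm_normsq]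
  exact integrable_finset_sum _ (fun i _ => stdG_sq_coord_integrable i)

lemma stdG_norm_int_le {d : ℕ} :
    ∫ u, ‖u‖ ∂(stdGaussian d) ≤ √d := by
  have hmem : MemLp (fun u : EuclideanSpace ℝ (Fin d) => ‖u‖) 2 (stdGaussian d) := by
    rw [memLp_two_iff_integrable_sq (continuous_norm.aestronglyMeasurable)]
    exact stdG_normsq_integrable
  have hv := ProbabilityTheory.variance_nonneg (fun u : EuclideanSpace ℝ (Fin d) => ‖u‖)
    (stdGaussian d)
  rw [ProbabilityTheory.variance_eq_sub hmem] at hv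
  have h2 : (∫ u, ‖u‖ ∂(stdGaussian d)) ^ 2 ≤ (d : ℝ) := by
    have := stdG_normsq_int (d := d)
    have h3 : ∫ (x : EuclideanSpace ℝ (Fin d)), ((fun u => ‖u‖) ^ 2) x ∂(stdGaussian d) = d := by
      simpa using this
    linarith
  have h0 : 0 ≤ ∫ u, ‖u‖ ∂(stdGaussian d) := integral_nonneg (fun u => norm_nonneg u)
  exact (Real.le_sqrt h0 (Nat.cast_nonneg d)).mpr h2

lemma spb_key {s a l : ℝ} (hs : 0 ≤ s) (ha : 0 < a) (hl : 0 < l) :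
    s ^ a ≤ (a / l) ^ a * rexp (-a) * rexp (l * s) := by
  rcases eq_or_lt_of_le hs with h | h
  · rw [← h, Real.zero_rpow ha.ne']
    positivity
  · rw [Real.rpow_def_of_pos h, Real.rpow_def_of_pos (by positivity), ← Real.exp_add,
      ← Real.exp_add]
    apply Real.exp_le_exp.2
    have hlog := Real.log_le_sub_one_of_pos (show 0 < l * s / a by positivity)
    have hls : Real.log (l * s / a) = Real.log l + Real.log s - Real.log a := by
      rw [Real.log_div (by positivity) ha.ne', Real.log_mul hl.ne' h.ne']
    have hla : Real.log (a / l) = Real.log a - Real.log l := Real.log_div ha.ne' hl.ne'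
    rw [hla]
    rw [hls] at hlog
    have := mul_le_mul_of_nonneg_left hlog ha.le
    have hda : a * (l * s / a) = l * s := by field_simp
    nlinarith

lemma norm_pow_eq_rpow {p : ℕ} (t : ℝ) (ht : 0 ≤ t) : t ^ p = (t ^ 2) ^ ((p : ℝ)/2) := by
  rw [← Real.rpow_natCast t 2, ← Real.rpow_mul ht,
    show ((2:ℕ):ℝ)*((p:ℝ)/2) = ((p:ℕ):ℝ) by push_cast; ring, Real.rpow_natCast]

lemma stdG_norm_pow_bound {d p : ℕ} (hp : 1 ≤ p) {l : ℝ} (hl : 0 < l)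
    (u : EuclideanSpace ℝ (Fin d)) :
    ‖u‖ ^ p ≤ ((p : ℝ)/(2*l)) ^ ((p:ℝ)/2) * rexp (-((p:ℝ)/2)) * rexp (l * ‖u‖ ^ 2) := by
  have ha : (0:ℝ) < (p:ℝ)/2 := by positivity
  have h := spb_key (s := ‖u‖^2) (a := (p:ℝ)/2) (l := l) (by positivity) ha hl
  rw [← norm_pow_eq_rpow _ (norm_nonneg u)] at h
  calc ‖u‖ ^ p ≤ ((p:ℝ)/2 / l) ^ ((p:ℝ)/2) * rexp (-((p:ℝ)/2)) * rexp (l * ‖u‖ ^ 2) := h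
    _ = ((p : ℝ)/(2*l)) ^ ((p:ℝ)/2) * rexp (-((p:ℝ)/2)) * rexp (l * ‖u‖ ^ 2) := by
        rw [div_div]

lemma stdG_norm_pow_integrable {d p : ℕ} :
    Integrable (fun u : EuclideanSpace ℝ (Fin d) => ‖u‖ ^ p) (stdGaussian d) := by
  rcases Nat.eq_zero_or_pos p with hp | hp
  · simp [hp]
  apply Integrable.mono' (((stdG_mgf_integrable (d := d) (l := 1/4) (by norm_num)).const_mul
    (((p : ℝ)/(2*(1/4))) ^ ((p:ℝ)/2) * rexp (-((p:ℝ)/2)))))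
    ((continuous_norm.pow p).aestronglyMeasurable)
  refine Filter.Eventually.of_forall fun u => ?_
  rw [Real.norm_eq_abs, abs_of_nonneg (a := ((fun a => ‖a‖) ^ p) u) (pow_nonneg (norm_nonneg u) p)]
  have := stdG_norm_pow_bound (d := d) hp (show (0:ℝ) < 1/4 by norm_num) u
  calc ‖u‖ ^ p ≤ _ := this
    _ = _ := by ring

lemma stdG_norm_pow_int_le {d p : ℕ} (hd : 1 ≤ d) (hp : 1 ≤ p) :
    ∫ u, ‖u‖ ^ p ∂(stdGaussian d) ≤ ((p + d : ℕ) : ℝ) ^ ((p : ℝ)/2) := by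
  set l : ℝ := (p : ℝ) / (2 * ((p : ℝ) + d)) with hldef
  have hpd : (0:ℝ) < (p:ℝ) + d := by positivity
  have hl : 0 < l := by positivity
  have hl2 : l < 1/2 := by
    rw [hldef, div_lt_iff₀ (by positivity)]
    have : (0:ℝ) < (d:ℝ) := by exact_mod_cast hd
    ring_nf
    linarith
  set C : ℝ := ((p : ℝ)/(2*l)) ^ ((p:ℝ)/2) * rexp (-((p:ℝ)/2)) with hCdef
  have h1 : ∫ u, ‖u‖ ^ p ∂(stdGaussian d) ≤ C * ((√(1 - 2*l))⁻¹) ^ d := by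
    rw [← stdG_mgf (d := d) hl2, ← integral_const_mul]
    apply integral_mono_of_nonneg
    · exact Filter.Eventually.of_forall fun u => by positivity
    · exact (stdG_mgf_integrable hl2).const_mul C
    · exact Filter.Eventually.of_forall fun u => stdG_norm_pow_bound hp hl u
  refine h1.trans ?_
  -- compute constants
  have hple : (p:ℝ)/(2*l) = (p:ℝ) + d := by
    rw [hldef]
    field_simp
  have h12l : 1 - 2*l = (d:ℝ) / ((p:ℝ) + d) := by
    rw [hldef]; field_simp; ring
  have hd0 : (0:ℝ) < (d:ℝ) := by exact_mod_cast hd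
  have hsqrt : ((√(1 - 2*l))⁻¹) ^ d = (((p:ℝ) + d)/d) ^ ((d:ℝ)/2) := by
    rw [h12l]
    calc (√((d:ℝ)/((p:ℝ)+d)))⁻¹ ^ d
        = ((((p:ℝ)+d)/(d:ℝ)) ^ ((1:ℝ)/2)) ^ (d:ℕ) := by
          rw [← Real.sqrt_inv, inv_div, Real.sqrt_eq_rpow]
      _ = (((p:ℝ)+d)/(d:ℝ)) ^ ((1:ℝ)/2 * (d:ℕ)) := by
          rw [← Real.rpow_natCast ((((p:ℝ)+d)/(d:ℝ)) ^ ((1:ℝ)/2)) d,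
            ← Real.rpow_mul (by positivity)]
      _ = (((p:ℝ)+d)/(d:ℝ)) ^ ((d:ℝ)/2) := by norm_num; ring_nf
  rw [hsqrt, hCdef, hple]
  have hexp : rexp (-((p:ℝ)/2)) * (((p:ℝ) + d)/d) ^ ((d:ℝ)/2) ≤ 1 := by
    have hlog : Real.log (((p:ℝ) + d)/d) ≤ (p:ℝ)/d := by
      have := Real.log_le_sub_one_of_pos (show (0:ℝ) < ((p:ℝ)+d)/d by positivity)
      have heq : ((p:ℝ)+d)/d - 1 = (p:ℝ)/d := by field_simp; ring
      linarith
    have : (((p:ℝ) + d)/d) ^ ((d:ℝ)/2) = rexp (((d:ℝ)/2) * Real.log (((p:ℝ)+d)/d)) := by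
      rw [Real.rpow_def_of_pos (by positivity)]
      ring_nf
    rw [this, ← Real.exp_add]
    have h5 : ((d:ℝ)/2) * Real.log (((p:ℝ)+d)/d) ≤ (p:ℝ)/2 := by
      calc ((d:ℝ)/2) * Real.log (((p:ℝ)+d)/d) ≤ ((d:ℝ)/2) * ((p:ℝ)/d) :=
            mul_le_mul_of_nonneg_left hlog (by positivity)
        _ = (p:ℝ)/2 := by field_simp
    have : -((p:ℝ)/2) + ((d:ℝ)/2) * Real.log (((p:ℝ)+d)/d) ≤ 0 := by linarith
    calc rexp _ ≤ rexp 0 := Real.exp_le_exp.2 this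
      _ = 1 := Real.exp_zero
  calc ((p:ℝ) + d) ^ ((p:ℝ)/2) * rexp (-((p:ℝ)/2)) * (((p:ℝ) + d)/d) ^ ((d:ℝ)/2)
      = ((p:ℝ) + d) ^ ((p:ℝ)/2) * (rexp (-((p:ℝ)/2)) * (((p:ℝ) + d)/d) ^ ((d:ℝ)/2)) := by ring
    _ ≤ ((p:ℝ) + d) ^ ((p:ℝ)/2) * 1 := by
        apply mul_le_mul_of_nonneg_left hexp (by positivity)
    _ = ((p + d : ℕ) : ℝ) ^ ((p:ℝ)/2) := by push_cast; ring

lemma spb_cont {d : ℕ} {f : EuclideanSpace ℝ (Fin d) → ℝ} {R1 R2 : ℝ} {m : ℕ}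
    (hf : SPBGrowth f R1 R2 m) : Continuous f := by
  rw [continuous_iff_continuousAt]
  intro x
  rw [ContinuousAt, tendsto_iff_dist_tendsto_zero]
  have hb : ∀ y, dist (f y) (f x)
      ≤ ((2:ℝ)^((m:ℤ)-1)*R1*‖x‖^m + (2:ℝ)^((m:ℤ)-1)*R1*‖y - x‖^m + R2)*‖x - y‖ := by
    intro y
    rw [Real.dist_eq, abs_sub_comm]
    exact hf x y
  apply squeeze_zero (fun y => dist_nonneg) hb
  have hc : Continuous fun y : EuclideanSpace ℝ (Fin d) =>
      ((2:ℝ)^((m:ℤ)-1)*R1*‖x‖^m + (2:ℝ)^((m:ℤ)-1)*R1*‖y - x‖^m + R2)*‖x - y‖ := by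
    fun_prop
  have h0 := hc.tendsto x
  simpa using h0

lemma spb_two_pow {a b : ℝ} (ha : 0 ≤ a) (hb : 0 ≤ b) (m : ℕ) :
    (a+b)^m ≤ (2:ℝ)^((m:ℤ)-1)*(a^m+b^m) := by
  cases m with
  | zero => norm_num
  | succ k =>
    have h := add_pow_le ha hb (k+1)
    have h2 : ((2:ℝ))^(((k+1:ℕ):ℤ)-1) = (2:ℝ)^k := by
      rw [show (((k+1:ℕ):ℤ)-1) = (k:ℤ) by push_cast; ring, zpow_natCast]
    rw [h2]
    simpa using h

lemma spb_abs_bound {d : ℕ} {f : EuclideanSpace ℝ (Fin d) → ℝ} {R1 R2 : ℝ} {m : ℕ}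
    (hf : SPBGrowth f R1 R2 m) (w : EuclideanSpace ℝ (Fin d)) :
    |f w| ≤ |f 0| + (((2:ℝ)^((m:ℤ)-1)*R1*‖(0 : EuclideanSpace ℝ (Fin d))‖^m + R2)
      + (2:ℝ)^((m:ℤ)-1)*R1*‖w‖^m)*‖w‖ := by
  have h := hf 0 w
  simp only [sub_zero, zero_sub, norm_neg] at h
  have h2 : |f w| - |f 0| ≤ |f w - f 0| := abs_sub_abs_le_abs_sub _ _
  rw [abs_sub_comm] at h2
  nlinarith [h, h2]

lemma spb_integrand_integrable {d : ℕ} {f : EuclideanSpace ℝ (Fin d) → ℝ} {R1 R2 : ℝ} {m : ℕ}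
    (hR1 : 0 ≤ R1) (hR2 : 0 < R2) (hf : SPBGrowth f R1 R2 m) {σ : ℝ} (hσ : 0 < σ)
    (z : EuclideanSpace ℝ (Fin d)) :
    Integrable (fun u => f (z + σ • u) • u) (stdGaussian d) := by
  set c : ℝ := (2:ℝ)^((m:ℤ)-1) with hcdef
  have hc : 0 < c := by positivity
  set K0 : ℝ := c*R1*‖(0 : EuclideanSpace ℝ (Fin d))‖^m with hK0def
  have hK0 : 0 ≤ K0 := by positivity
  set a : ℝ := ‖z‖ + σ with hadef
  have ha : 0 < a := by positivity
  set C : ℝ := |f 0| + (K0+R2)*a + c*R1*a^(m+1) with hCdef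
  have hC : 0 ≤ C := by positivity
  have hint : Integrable (fun u : EuclideanSpace ℝ (Fin d) => C * (1+‖u‖)^(m+2))
      (stdGaussian d) := by
    have hexp : ∀ u : EuclideanSpace ℝ (Fin d),
        (1+‖u‖)^(m+2) = ∑ k ∈ Finset.range (m+3), ‖u‖^k * ((m+2).choose k : ℝ) := by
      intro u
      rw [add_comm (1:ℝ), add_pow]
      simp
    simp_rw [hexp]
    exact (integrable_finset_sum _ (fun k _ =>
      (stdG_norm_pow_integrable (p := k)).mul_const _)).const_mul C
  apply Integrable.mono' hint
  · apply Continuous.aestronglyMeasurable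
    have hcf : Continuous fun u : EuclideanSpace ℝ (Fin d) => f (z + σ • u) :=
      (spb_cont hf).comp (by fun_prop)
    exact hcf.smul continuous_id
  · refine Filter.Eventually.of_forall fun u => ?_
    rw [norm_smul, Real.norm_eq_abs]
    set t : ℝ := ‖u‖ with htdef
    have ht : 0 ≤ t := norm_nonneg u
    have h1 : ‖z + σ • u‖ ≤ a*(1+t) := by
      calc ‖z + σ • u‖ ≤ ‖z‖ + ‖σ • u‖ := norm_add_le _ _
        _ = ‖z‖ + σ * t := by rw [norm_smul, Real.norm_eq_abs, abs_of_pos hσ]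
        _ ≤ a*(1+t) := by
            rw [hadef]
            nlinarith [mul_nonneg (norm_nonneg z) ht]
    have h2 : ‖z + σ • u‖^m ≤ a^m*(1+t)^m := by
      rw [← mul_pow]; exact pow_le_pow_left₀ (norm_nonneg _) h1 m
    have hfb := spb_abs_bound hf (z + σ • u)
    have h3 : |f (z + σ • u)| ≤ |f 0| + (K0+R2)*(a*(1+t)) + c*R1*(a^m*(1+t)^m)*(a*(1+t)) := by
      calc |f (z + σ • u)| ≤ |f 0| + ((K0+R2) + c*R1*‖z + σ • u‖^m)*‖z + σ • u‖ := by
            have := hfb; nlinarith [norm_nonneg (z + σ • u)]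
        _ ≤ |f 0| + (K0+R2)*(a*(1+t)) + c*R1*(a^m*(1+t)^m)*(a*(1+t)) := by
            nlinarith [norm_nonneg (z + σ • u), mul_nonneg hc.le hR1,
              pow_nonneg (norm_nonneg (z + σ • u)) m, h2,
              mul_le_mul h2 h1 (norm_nonneg _) (by positivity)]
    have h4 : (1:ℝ) ≤ (1+t)^(m+1) := one_le_pow₀ (by linarith)
    have h5 : (1+t) ≤ (1+t)^(m+1) := le_self_pow₀ (by linarith) (Nat.succ_ne_zero m)
    have h6 : |f (z + σ • u)| ≤ C*(1+t)^(m+1) := by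
      have he : c*R1*(a^m*(1+t)^m)*(a*(1+t)) = c*R1*a^(m+1)*(1+t)^(m+1) := by ring
      rw [he] at h3
      rw [hCdef]
      have e1 : 0 ≤ |f 0| * ((1+t)^(m+1) - 1) := mul_nonneg (abs_nonneg _) (by linarith)
      have e2 : 0 ≤ (K0+R2)*a*((1+t)^(m+1) - (1+t)) :=
        mul_nonneg (by positivity) (by linarith)
      nlinarith [h3, e1, e2]
    calc |f (z + σ • u)| * t ≤ C*(1+t)^(m+1) * (1+t) := by
          apply mul_le_mul h6 (by linarith) ht (by positivity)
      _ = C * (1+t)^(m+2) := by ring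


/-- Theorem 3.5(ii). Lipschitz-type bound for `∇f_σ`:
`‖∇f_σ(x) - ∇f_σ(y)‖ ≤ (𝒜 + ℬ ‖x‖^m + 𝒞 ‖y - x‖^m) ‖x - y‖`. -/
theorem gsGrad_lipschitz_type {d : ℕ} (hd : 1 ≤ d) (f : EuclideanSpace ℝ (Fin d) → ℝ)
    (R1 R2 : ℝ) (m : ℕ) (hR1 : 0 ≤ R1) (hR2 : 0 < R2) (hR1m : R1 = 0 ↔ m = 0)
    (hf : SPBGrowth f R1 R2 m) (σ : ℝ) (hσ : 0 < σ) (x y : EuclideanSpace ℝ (Fin d)) :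
    ‖gsGrad σ f x - gsGrad σ f y‖ ≤
      (spbA d m R1 R2 σ + spbB d m R1 σ * ‖x‖ ^ m + spbC d m R1 σ * ‖y - x‖ ^ m)
        * ‖x - y‖ := by
  have hIx := spb_integrand_integrable hR1 hR2 hf hσ x
  have hIy := spb_integrand_integrable hR1 hR2 hf hσ y
  have hdiff : gsGrad σ f x - gsGrad σ f y
      = σ⁻¹ • ∫ u, (f (x + σ • u) - f (y + σ • u)) • u ∂(stdGaussian d) := by
    rw [gsGrad, gsGrad, ← smul_sub, ← integral_sub hIx hIy]
    simp_rw [← sub_smul]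
  rw [hdiff, norm_smul, Real.norm_eq_abs, abs_of_pos (inv_pos.2 hσ)]
  have hM1 : ∫ u, ‖u‖ ∂(stdGaussian d) ≤ √d := stdG_norm_int_le
  have hM2 : ∫ u, ‖u‖^(m+1) ∂(stdGaussian d)
      ≤ (((m+1) + d : ℕ) : ℝ) ^ (((m+1 : ℕ) : ℝ)/2) :=
    stdG_norm_pow_int_le hd (by omega)
  set K1 : ℝ := ‖x - y‖ * ((2:ℝ)^((m:ℤ)-1)*(2:ℝ)^((m:ℤ)-1)*R1*‖x‖^m
    + (2:ℝ)^((m:ℤ)-1)*R1*‖y-x‖^m + R2) with hK1def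
  set K2 : ℝ := ‖x - y‖ * ((2:ℝ)^((m:ℤ)-1)*(2:ℝ)^((m:ℤ)-1)*R1*σ^m) with hK2def
  have hK1 : 0 ≤ K1 := by rw [hK1def]; positivity
  have hK2 : 0 ≤ K2 := by rw [hK2def]; positivity
  have hbound : ∀ u : EuclideanSpace ℝ (Fin d),
      ‖(f (x + σ • u) - f (y + σ • u)) • u‖ ≤ K1 * ‖u‖ + K2 * ‖u‖^(m+1) := by
    intro u
    rw [norm_smul, Real.norm_eq_abs]
    have ht : (0:ℝ) ≤ ‖u‖ := norm_nonneg u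
    have h0 := hf (x + σ • u) (y + σ • u)
    have he1 : (y + σ • u) - (x + σ • u) = y - x := by abel
    have he2 : (x + σ • u) - (y + σ • u) = x - y := by abel
    rw [he1, he2] at h0
    have h2 : ‖x + σ • u‖^m ≤ (2:ℝ)^((m:ℤ)-1)*(‖x‖^m + σ^m*‖u‖^m) := by
      have h1 : ‖x + σ • u‖ ≤ ‖x‖ + σ*‖u‖ := by
        calc ‖x + σ•u‖ ≤ ‖x‖ + ‖σ•u‖ := norm_add_le _ _
          _ = ‖x‖ + σ*‖u‖ := by rw [norm_smul, Real.norm_eq_abs, abs_of_pos hσ]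
      calc ‖x + σ•u‖^m ≤ (‖x‖ + σ*‖u‖)^m := pow_le_pow_left₀ (norm_nonneg _) h1 m
        _ ≤ (2:ℝ)^((m:ℤ)-1)*(‖x‖^m + (σ*‖u‖)^m) :=
            spb_two_pow (norm_nonneg x) (by positivity) m
        _ = (2:ℝ)^((m:ℤ)-1)*(‖x‖^m + σ^m*‖u‖^m) := by rw [mul_pow]
    calc |f (x + σ•u) - f (y + σ•u)| * ‖u‖
        ≤ (((2:ℝ)^((m:ℤ)-1)*R1*‖x + σ•u‖^m + (2:ℝ)^((m:ℤ)-1)*R1*‖y-x‖^m + R2)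
            * ‖x-y‖) * ‖u‖ := mul_le_mul_of_nonneg_right h0 ht
      _ ≤ (((2:ℝ)^((m:ℤ)-1)*R1*((2:ℝ)^((m:ℤ)-1)*(‖x‖^m + σ^m*‖u‖^m))
            + (2:ℝ)^((m:ℤ)-1)*R1*‖y-x‖^m + R2) * ‖x-y‖) * ‖u‖ := by
          gcongr
      _ = K1 * ‖u‖ + K2 * ‖u‖^(m+1) := by
          rw [hK1def, hK2def]; ring
  have hint1 : Integrable (fun u : EuclideanSpace ℝ (Fin d) => ‖u‖) (stdGaussian d) := by
    have := stdG_norm_pow_integrable (d := d) (p := 1)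
    simpa using this
  have hintc : Integrable (fun u : EuclideanSpace ℝ (Fin d) =>
      K1 * ‖u‖ + K2 * ‖u‖^(m+1)) (stdGaussian d) :=
    (hint1.const_mul K1).add ((stdG_norm_pow_integrable (p := m+1)).const_mul K2)
  have hmono : ‖∫ u, (f (x + σ • u) - f (y + σ • u)) • u ∂(stdGaussian d)‖
      ≤ K1 * √d + K2 * (((m+1) + d : ℕ) : ℝ) ^ (((m+1 : ℕ) : ℝ)/2) := by
    calc ‖∫ u, (f (x + σ • u) - f (y + σ • u)) • u ∂(stdGaussian d)‖
        ≤ ∫ u, ‖(f (x + σ • u) - f (y + σ • u)) • u‖ ∂(stdGaussian d) :=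
          norm_integral_le_integral_norm _
      _ ≤ ∫ u, (K1 * ‖u‖ + K2 * ‖u‖^(m+1)) ∂(stdGaussian d) :=
          integral_mono_of_nonneg (Filter.Eventually.of_forall fun u => norm_nonneg _)
            hintc (Filter.Eventually.of_forall hbound)
      _ = K1 * ∫ u, ‖u‖ ∂(stdGaussian d) + K2 * ∫ u, ‖u‖^(m+1) ∂(stdGaussian d) := by
          rw [integral_add (hint1.const_mul K1)
            ((stdG_norm_pow_integrable (p := m+1)).const_mul K2),
            integral_const_mul, integral_const_mul]
      _ ≤ K1 * √d + K2 * (((m+1) + d : ℕ) : ℝ) ^ (((m+1 : ℕ) : ℝ)/2) :=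
          add_le_add (mul_le_mul_of_nonneg_left hM1 hK1)
            (mul_le_mul_of_nonneg_left hM2 hK2)
  calc σ⁻¹ * ‖∫ u, (f (x + σ • u) - f (y + σ • u)) • u ∂(stdGaussian d)‖
      ≤ σ⁻¹ * (K1 * √d + K2 * (((m+1) + d : ℕ) : ℝ) ^ (((m+1 : ℕ) : ℝ)/2)) :=
        mul_le_mul_of_nonneg_left hmono (by positivity)
    _ = (spbA d m R1 R2 σ + spbB d m R1 σ * ‖x‖ ^ m + spbC d m R1 σ * ‖y - x‖ ^ m)
        * ‖x - y‖ := by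
      rw [hK1def, hK2def, spbA, spbB, spbC]
      have hz1 : (2:ℝ) ^ (2*(m:ℤ)-2) = (2:ℝ)^((m:ℤ)-1) * (2:ℝ)^((m:ℤ)-1) := by
        rw [← zpow_add₀ (two_ne_zero)]
        congr 1
        ring
      have hz2 : σ ^ ((m:ℤ)-1) = σ^m * σ⁻¹ := by
        rw [zpow_sub₀ hσ.ne', zpow_natCast, zpow_one]
        rfl
      have hz3 : (((m+1 : ℕ)) : ℝ)/2 = ((m:ℝ)+1)/2 := by push_cast; ring
      have hz4 : ((m+1) + d : ℕ) = (m + 1 + d : ℕ) := by ring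
      rw [hz1, hz2, hz3, hz4]
      ring
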